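/- Let e be a finite Borel measure on (0, ∞) and let α > 1. Suppose there exists C > 0 such that for all δ > 0, ∫_{(0,δ]} λ^{−1} de(λ) ≤ C δ^{α − 1}. Define I₂(μ) = ∫ μ² / (λ (λ + μ)²) de(λ) for μ > 0. Then there exists C′ > 0 such that for all μ > 0: 0 ≤ I₂(μ) ≤ C′ μ^{α − 1} if α < 3; 0 ≤ I₂(μ) ≤ C′ μ² max(1, ln(1/μ)) if α = 3; 0 ≤ I₂(μ) ≤ C′ μ² if α > 3. -/

import Mathlib

open MeasureTheory ENNReal
open scoped ENNReal


lemma ftc1 (l : ℝ) (hl : 0 < l) (hl1 : l ≤ 1) :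
    ∫ t in Set.Ioc l 1, 2 / t ^ 3 = (l ^ 2)⁻¹ - 1 := by
  have h1 : ∀ t ∈ Set.uIcc l 1, HasDerivAt (fun t : ℝ => -(t ^ 2)⁻¹) (2 / t ^ 3) t := by
    intro t ht
    rw [Set.uIcc_of_le hl1] at ht
    have ht0 : (0:ℝ) < t := lt_of_lt_of_le hl ht.1
    have : HasDerivAt (fun t : ℝ => -(t ^ 2)⁻¹) _ t := ((hasDerivAt_pow 2 t).inv (by positivity)).neg
    convert this using 1
    field_simp
    ring
  have h2 : IntervalIntegrable (fun t : ℝ => 2 / t ^ 3) volume l 1 := by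
    apply ContinuousOn.intervalIntegrable
    apply ContinuousOn.div continuousOn_const (by fun_prop)
    intro t ht
    rw [Set.uIcc_of_le hl1] at ht
    have : (0:ℝ) < t := lt_of_lt_of_le hl ht.1
    positivity
  rw [← intervalIntegral.integral_of_le hl1,
    intervalIntegral.integral_eq_sub_of_hasDerivAt h1 h2]
  norm_num
  ring

lemma ofReal_inv_sq (l : ℝ) (hl : 0 < l) (hl1 : l ≤ 1) :
    ENNReal.ofReal ((l ^ 2)⁻¹) = 1 + ∫⁻ t in Set.Ioc l 1, ENNReal.ofReal (2 / t ^ 3) := by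
  have h2 : IntegrableOn (fun t : ℝ => 2 / t ^ 3) (Set.Ioc l 1) := by
    have : IntervalIntegrable (fun t : ℝ => 2 / t ^ 3) volume l 1 := by
      apply ContinuousOn.intervalIntegrable
      apply ContinuousOn.div continuousOn_const (by fun_prop)
      intro t ht
      rw [Set.uIcc_of_le hl1] at ht
      have : (0:ℝ) < t := lt_of_lt_of_le hl ht.1
      positivity
    rwa [intervalIntegrable_iff_integrableOn_Ioc_of_le hl1] at this
  have hnn : 0 ≤ᵐ[volume.restrict (Set.Ioc l 1)] fun t : ℝ => 2 / t ^ 3 := by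
    filter_upwards [ae_restrict_mem measurableSet_Ioc] with t ht
    have : (0:ℝ) < t := lt_trans hl ht.1
    positivity
  have := MeasureTheory.ofReal_integral_eq_lintegral_ofReal h2 hnn
  rw [← this, ftc1 l hl hl1]
  have h1 : (1:ℝ) ≤ (l ^ 2)⁻¹ := by
    rw [le_inv_comm₀] <;> nlinarith
  rw [← ENNReal.ofReal_one, ← ENNReal.ofReal_add (by norm_num) (by linarith)]
  norm_num

lemma Jbound (e : Measure ℝ) [IsFiniteMeasure e] (α C : ℝ) (hC : 0 ≤ C)
    (h : ∀ δ : ℝ, 0 < δ →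
      ∫⁻ l in Set.Ioc (0 : ℝ) δ, (ENNReal.ofReal l)⁻¹ ∂e ≤
        ENNReal.ofReal (C * δ ^ (α - 1)))
    (μ : ℝ) (hμ : 0 < μ) (hμ1 : μ ≤ 1) :
    ∫⁻ l in Set.Ioc μ 1, ENNReal.ofReal (l⁻¹ * (l ^ 2)⁻¹) ∂e ≤
      ENNReal.ofReal C + ∫⁻ t in Set.Ioc μ 1, ENNReal.ofReal (2 * C * t ^ (α - 4)) := by
  set G : ℝ × ℝ → ℝ≥0∞ :=
    {q : ℝ × ℝ | q.1 < q.2}.indicator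
      (fun q => ENNReal.ofReal q.1⁻¹ * ENNReal.ofReal (2 / q.2 ^ 3)) with hG
  have hGmeas : Measurable G := by
    apply Measurable.indicator
    · fun_prop
    · exact measurableSet_lt measurable_fst measurable_snd
  -- Step 1: rewrite integrand
  have step1 : ∫⁻ l in Set.Ioc μ 1, ENNReal.ofReal (l⁻¹ * (l ^ 2)⁻¹) ∂e =
      ∫⁻ l in Set.Ioc μ 1,
        (ENNReal.ofReal l⁻¹ + ∫⁻ t in Set.Ioc μ 1, G (l, t) ∂volume) ∂e := by
    apply setLIntegral_congr_fun measurableSet_Ioc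
    intro l hl
    beta_reduce
    have hl0 : 0 < l := lt_trans hμ hl.1
    have key : (fun t => G (l, t)) =
        (Set.Ioi l).indicator (fun t => ENNReal.ofReal l⁻¹ * ENNReal.ofReal (2 / t ^ 3)) := by
      funext t
      by_cases hlt : l < t <;> simp [hG, Set.indicator, hlt]
    rw [key, lintegral_indicator measurableSet_Ioi, Measure.restrict_restrict measurableSet_Ioi]
    have hset : Set.Ioi l ∩ Set.Ioc μ 1 = Set.Ioc l 1 := by
      ext x
      simp only [Set.mem_inter_iff, Set.mem_Ioi, Set.mem_Ioc]
      constructor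
      · rintro ⟨h1, _, h3⟩; exact ⟨h1, h3⟩
      · rintro ⟨h1, h2⟩; exact ⟨h1, lt_trans hl.1 h1, h2⟩
    rw [hset, lintegral_const_mul' _ _ ofReal_ne_top,
      ENNReal.ofReal_mul (show (0:ℝ) ≤ l⁻¹ by positivity), ofReal_inv_sq l hl0 hl.2,
      mul_add, mul_one]
  rw [step1, lintegral_add_left (by fun_prop)]
  refine add_le_add ?_ ?_
  · -- first term ≤ ofReal C
    calc ∫⁻ l in Set.Ioc μ 1, ENNReal.ofReal l⁻¹ ∂e
        = ∫⁻ l in Set.Ioc μ 1, (ENNReal.ofReal l)⁻¹ ∂e := by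
          apply setLIntegral_congr_fun measurableSet_Ioc
          intro l hl
          exact ENNReal.ofReal_inv_of_pos (lt_trans hμ hl.1)
      _ ≤ ∫⁻ l in Set.Ioc 0 1, (ENNReal.ofReal l)⁻¹ ∂e :=
          lintegral_mono_set (Set.Ioc_subset_Ioc_left hμ.le)
      _ ≤ ENNReal.ofReal (C * (1:ℝ) ^ (α - 1)) := h 1 one_pos
      _ = ENNReal.ofReal C := by rw [Real.one_rpow, mul_one]
  · -- second term: swap
    refine le_trans (le_of_eq (lintegral_lintegral_swap (f := fun l t => G (l, t))
      hGmeas.aemeasurable)) ?_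
    apply setLIntegral_mono (by fun_prop)
    intro t ht
    have ht0 : 0 < t := lt_trans hμ ht.1
    have key : (fun l => G (l, t)) =
        (Set.Iio t).indicator (fun l => ENNReal.ofReal l⁻¹ * ENNReal.ofReal (2 / t ^ 3)) := by
      funext l
      by_cases hlt : l < t <;> simp [hG, Set.indicator, hlt]
    rw [key, lintegral_indicator measurableSet_Iio, Measure.restrict_restrict measurableSet_Iio,
      lintegral_mul_const' _ _ ofReal_ne_top]
    have hle : ∫⁻ l in Set.Iio t ∩ Set.Ioc μ 1, ENNReal.ofReal l⁻¹ ∂e ≤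
        ENNReal.ofReal (C * t ^ (α - 1)) := by
      calc ∫⁻ l in Set.Iio t ∩ Set.Ioc μ 1, ENNReal.ofReal l⁻¹ ∂e
          = ∫⁻ l in Set.Iio t ∩ Set.Ioc μ 1, (ENNReal.ofReal l)⁻¹ ∂e := by
            apply setLIntegral_congr_fun (measurableSet_Iio.inter measurableSet_Ioc)
            intro l hl
            exact ENNReal.ofReal_inv_of_pos (lt_trans hμ hl.2.1)
        _ ≤ ∫⁻ l in Set.Ioc 0 t, (ENNReal.ofReal l)⁻¹ ∂e := by
            apply lintegral_mono_set
            rintro l ⟨h1, h2, _⟩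
            exact ⟨lt_trans hμ h2, le_of_lt h1⟩
        _ ≤ ENNReal.ofReal (C * t ^ (α - 1)) := h t ht0
    calc (∫⁻ l in Set.Iio t ∩ Set.Ioc μ 1, ENNReal.ofReal l⁻¹ ∂e) * ENNReal.ofReal (2 / t ^ 3)
        ≤ ENNReal.ofReal (C * t ^ (α - 1)) * ENNReal.ofReal (2 / t ^ 3) := by gcongr
      _ = ENNReal.ofReal (2 * C * t ^ (α - 4)) := by
          rw [← ENNReal.ofReal_mul (mul_nonneg hC (Real.rpow_nonneg ht0.le _))]
          congr 1
          have h3 : (t : ℝ) ^ (3:ℕ) = t ^ (3:ℝ) := (Real.rpow_natCast t 3).symm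
          have ht4 : t ^ (α - 4) = t ^ (α - 1) / t ^ (3:ℝ) := by
            rw [← Real.rpow_sub ht0, show α - 1 - 3 = α - 4 by ring]
          rw [ht4, ← h3]
          field_simp


lemma Tval (α C μ : ℝ) (hC : 0 ≤ C) (hμ : 0 < μ) (hμ1 : μ ≤ 1) :
    ∫⁻ t in Set.Ioc μ 1, ENNReal.ofReal (2 * C * t ^ (α - 4)) =
      ENNReal.ofReal (∫ t in μ..1, 2 * C * t ^ (α - 4)) := by
  rw [intervalIntegral.integral_of_le hμ1]
  refine (MeasureTheory.ofReal_integral_eq_lintegral_ofReal ?_ ?_).symm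
  · have hc : ContinuousOn (fun t : ℝ => 2 * C * t ^ (α - 4)) (Set.Icc μ 1) := by
      apply ContinuousOn.mul continuousOn_const
      apply ContinuousOn.rpow_const continuousOn_id
      intro t ht
      exact Or.inl (ne_of_gt (lt_of_lt_of_le hμ ht.1))
    exact (hc.integrableOn_Icc).mono_set Set.Ioc_subset_Icc_self
  · filter_upwards [ae_restrict_mem measurableSet_Ioc] with t ht
    exact mul_nonneg (by linarith) (Real.rpow_nonneg (le_of_lt (lt_trans hμ ht.1)) _)


lemma Lrestrict (e : Measure ℝ) (he : e (Set.Iic 0) = 0) (F : ℝ → ℝ≥0∞) :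
    ∫⁻ l, F l ∂e = ∫⁻ l in Set.Ioi 0, F l ∂e := by
  have hres : e.restrict (Set.Ioi 0) = e := by
    apply Measure.restrict_eq_self_of_ae_mem
    rw [Filter.eventually_iff, mem_ae_iff]
    refine measure_mono_null ?_ he
    intro x hx
    simpa using hx
  conv_lhs => rw [← hres]

lemma Lsplit (e : Measure ℝ) (he : e (Set.Iic 0) = 0) (F : ℝ → ℝ≥0∞) (b : ℝ) (hb : 0 < b) :
    ∫⁻ l, F l ∂e = (∫⁻ l in Set.Ioc 0 b, F l ∂e) + ∫⁻ l in Set.Ioi b, F l ∂e := by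
  rw [Lrestrict e he, ← Set.Ioc_union_Ioi_eq_Ioi hb.le,
    lintegral_union measurableSet_Ioi Set.Ioc_disjoint_Ioi_same]

lemma Lbig (e : Measure ℝ) [IsFiniteMeasure e]
    (he : e (Set.Iic 0) = 0) (α C : ℝ)
    (h : ∀ δ : ℝ, 0 < δ →
      ∫⁻ l in Set.Ioc (0 : ℝ) δ, (ENNReal.ofReal l)⁻¹ ∂e ≤
        ENNReal.ofReal (C * δ ^ (α - 1)))
    (μ : ℝ) (hμ : 1 ≤ μ) :
    ∫⁻ l, ENNReal.ofReal (μ ^ 2 / (l * (l + μ) ^ 2)) ∂e ≤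
      ENNReal.ofReal (C * (1:ℝ) ^ (α - 1)) + e Set.univ := by
  have hμ0 : 0 < μ := lt_of_lt_of_le one_pos hμ
  rw [Lsplit e he _ 1 one_pos]
  refine add_le_add ?_ ?_
  · refine le_trans ?_ (h 1 one_pos)
    apply setLIntegral_mono (by fun_prop)
    intro l hl
    have hl0 : 0 < l := hl.1
    rw [← ENNReal.ofReal_inv_of_pos hl0]
    apply ENNReal.ofReal_le_ofReal
    rw [div_le_iff₀ (by positivity)]
    have : μ ^ 2 ≤ (l + μ) ^ 2 := by nlinarith
    calc μ ^ 2 ≤ (l + μ) ^ 2 := this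
      _ ≤ l⁻¹ * (l * (l + μ) ^ 2) := by
          rw [← mul_assoc, inv_mul_cancel₀ (ne_of_gt hl0), one_mul]
  · calc ∫⁻ l in Set.Ioi 1, ENNReal.ofReal (μ ^ 2 / (l * (l + μ) ^ 2)) ∂e
        ≤ ∫⁻ _ in Set.Ioi (1:ℝ), 1 ∂e := by
          apply setLIntegral_mono (by fun_prop)
          intro l hl
          have hl1 : (1:ℝ) < l := hl
          apply ENNReal.ofReal_le_one.mpr
          rw [div_le_one (by positivity)]
          nlinarith
      _ = e (Set.Ioi 1) := by rw [setLIntegral_const, one_mul]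
      _ ≤ e Set.univ := measure_mono (Set.subset_univ _)


lemma Lmaster (e : Measure ℝ) [IsFiniteMeasure e]
    (he : e (Set.Iic 0) = 0) (α C : ℝ) (hC : 0 ≤ C)
    (h : ∀ δ : ℝ, 0 < δ →
      ∫⁻ l in Set.Ioc (0 : ℝ) δ, (ENNReal.ofReal l)⁻¹ ∂e ≤
        ENNReal.ofReal (C * δ ^ (α - 1)))
    (μ : ℝ) (hμ : 0 < μ) (hμ1 : μ ≤ 1) :
    ∫⁻ l, ENNReal.ofReal (μ ^ 2 / (l * (l + μ) ^ 2)) ∂e ≤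
      ENNReal.ofReal (C * μ ^ (α - 1)) +
        ENNReal.ofReal (μ ^ 2) *
          (ENNReal.ofReal C + ENNReal.ofReal (∫ t in μ..1, 2 * C * t ^ (α - 4))) +
        ENNReal.ofReal (μ ^ 2) * e Set.univ := by
  rw [Lsplit e he _ μ hμ]
  have hIoi : ∫⁻ l in Set.Ioi μ, ENNReal.ofReal (μ ^ 2 / (l * (l + μ) ^ 2)) ∂e =
      (∫⁻ l in Set.Ioc μ 1, ENNReal.ofReal (μ ^ 2 / (l * (l + μ) ^ 2)) ∂e) +
        ∫⁻ l in Set.Ioi 1, ENNReal.ofReal (μ ^ 2 / (l * (l + μ) ^ 2)) ∂e := by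
    rw [← Set.Ioc_union_Ioi_eq_Ioi hμ1,
      lintegral_union measurableSet_Ioi Set.Ioc_disjoint_Ioi_same]
  rw [hIoi, ← add_assoc]
  refine add_le_add (add_le_add ?_ ?_) ?_
  · -- (0, μ]
    refine le_trans ?_ (h μ hμ)
    apply setLIntegral_mono (by fun_prop)
    intro l hl
    have hl0 : 0 < l := hl.1
    rw [← ENNReal.ofReal_inv_of_pos hl0]
    apply ENNReal.ofReal_le_ofReal
    rw [div_le_iff₀ (by positivity)]
    calc μ ^ 2 ≤ (l + μ) ^ 2 := by nlinarith
      _ ≤ l⁻¹ * (l * (l + μ) ^ 2) := by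
          rw [← mul_assoc, inv_mul_cancel₀ (ne_of_gt hl0), one_mul]
  · -- (μ, 1]
    calc ∫⁻ l in Set.Ioc μ 1, ENNReal.ofReal (μ ^ 2 / (l * (l + μ) ^ 2)) ∂e
        ≤ ∫⁻ l in Set.Ioc μ 1, ENNReal.ofReal (μ ^ 2) *
            ENNReal.ofReal (l⁻¹ * (l ^ 2)⁻¹) ∂e := by
          apply setLIntegral_mono (by fun_prop)
          intro l hl
          have hl0 : 0 < l := lt_trans hμ hl.1
          rw [← ENNReal.ofReal_mul (by positivity)]
          apply ENNReal.ofReal_le_ofReal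
          rw [div_le_iff₀ (by positivity)]
          have key : l ^ 3 ≤ l * (l + μ) ^ 2 := by
            nlinarith [mul_pos (mul_pos hl0 hl0) hμ, mul_pos hl0 (mul_pos hμ hμ)]
          have h2 : μ ^ 2 * (l⁻¹ * (l ^ 2)⁻¹) * (l * (l + μ) ^ 2) =
              μ ^ 2 * ((l * (l + μ) ^ 2) / l ^ 3) := by
            field_simp
          rw [h2]
          have : (1:ℝ) ≤ (l * (l + μ) ^ 2) / l ^ 3 := by
            rw [le_div_iff₀ (by positivity)]
            linarith
          nlinarith
      _ = ENNReal.ofReal (μ ^ 2) *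
            ∫⁻ l in Set.Ioc μ 1, ENNReal.ofReal (l⁻¹ * (l ^ 2)⁻¹) ∂e := by
          rw [lintegral_const_mul' _ _ ofReal_ne_top]
      _ ≤ ENNReal.ofReal (μ ^ 2) *
            (ENNReal.ofReal C + ENNReal.ofReal (∫ t in μ..1, 2 * C * t ^ (α - 4))) := by
          apply mul_le_mul_right
          rw [← Tval α C μ hC hμ hμ1]
          exact Jbound e α C hC h μ hμ hμ1
  · -- (1, ∞)
    calc ∫⁻ l in Set.Ioi 1, ENNReal.ofReal (μ ^ 2 / (l * (l + μ) ^ 2)) ∂e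
        ≤ ∫⁻ _ in Set.Ioi (1:ℝ), ENNReal.ofReal (μ ^ 2) ∂e := by
          apply setLIntegral_mono (by fun_prop)
          intro l hl
          have hl1 : (1:ℝ) < l := hl
          apply ENNReal.ofReal_le_ofReal
          rw [div_le_iff₀ (by positivity)]
          have h1 : (1:ℝ) ≤ l * (l + μ) ^ 2 := by nlinarith
          nlinarith [mul_le_mul_of_nonneg_left h1 (sq_nonneg μ)]
      _ = ENNReal.ofReal (μ ^ 2) * e (Set.Ioi 1) := by rw [setLIntegral_const]
      _ ≤ ENNReal.ofReal (μ ^ 2) * e Set.univ :=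
          mul_le_mul_right (measure_mono (Set.subset_univ _)) _


-- interval integral computations
lemma Iv_eq (α C μ : ℝ) (hα3 : α ≠ 3) (hμ : 0 < μ) (hμ1 : μ ≤ 1) :
    ∫ t in μ..1, 2 * C * t ^ (α - 4) = 2 * C * ((1 - μ ^ (α - 3)) / (α - 3)) := by
  rw [show (fun t : ℝ => 2 * C * t ^ (α - 4)) = fun t : ℝ => (2 * C) * t ^ (α - 4) by rfl]
  rw [intervalIntegral.integral_const_mul,
    integral_rpow (Or.inr ⟨by intro hcon; apply hα3; linarith, by
      rw [Set.uIcc_of_le hμ1]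
      intro hmem
      exact absurd hmem.1 (not_le.mpr hμ)⟩)]
  rw [show α - 4 + 1 = α - 3 by ring, Real.one_rpow]

lemma Iv_eq3 (C μ : ℝ) (hμ : 0 < μ) (hμ1 : μ ≤ 1) :
    ∫ t in μ..1, 2 * C * t ^ ((3:ℝ) - 4) = 2 * C * Real.log (1 / μ) := by
  have hfn : (fun t : ℝ => 2 * C * t ^ ((3:ℝ) - 4)) = fun t : ℝ => (2 * C) * t⁻¹ := by
    funext t
    congr 1
    rw [show (3:ℝ) - 4 = ((-1 : ℤ) : ℝ) by norm_num, Real.rpow_intCast, zpow_neg_one]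
  rw [hfn, intervalIntegral.integral_const_mul, integral_inv (by
    rw [Set.uIcc_of_le hμ1]
    intro hmem
    exact absurd hmem.1 (not_le.mpr hμ))]

/-- Upper bounds on `I₂(μ) = ∫ μ²/(λ(λ+μ)²) de(λ)` for a finite Borel measure `e` on `(0, ∞)`
satisfying `∫_{(0,δ]} λ⁻¹ de(λ) ≤ C δ^{α-1}`: `I₂(μ) ≲ μ^{α-1}` if `α < 3`,
`I₂(μ) ≲ μ² ln_+(1/μ)` if `α = 3`, `I₂(μ) ≲ μ²` if `α > 3`. -/
theorem I2_upper_bounds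
    (e : Measure ℝ) [IsFiniteMeasure e] (he : e (Set.Iic 0) = 0)
    (α : ℝ) (hα : 1 < α) (C : ℝ) (hC : 0 < C)
    (h : ∀ δ : ℝ, 0 < δ →
      ∫⁻ l in Set.Ioc (0 : ℝ) δ, (ENNReal.ofReal l)⁻¹ ∂e ≤
        ENNReal.ofReal (C * δ ^ (α - 1))) :
    ∃ C' : ℝ, 0 < C' ∧ ∀ μ : ℝ, 0 < μ →
      (0 ≤ ∫ l, μ ^ 2 / (l * (l + μ) ^ 2) ∂e) ∧
      (α < 3 → ∫ l, μ ^ 2 / (l * (l + μ) ^ 2) ∂e ≤ C' * μ ^ (α - 1)) ∧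
      (α = 3 → ∫ l, μ ^ 2 / (l * (l + μ) ^ 2) ∂e ≤ C' * μ ^ 2 * max 1 (Real.log (1 / μ))) ∧
      (3 < α → ∫ l, μ ^ 2 / (l * (l + μ) ^ 2) ∂e ≤ C' * μ ^ 2) := by
  have hC0 : 0 ≤ C := hC.le
  set Er := (e Set.univ).toReal with hErdef
  have hEr : e Set.univ = ENNReal.ofReal Er := (ENNReal.ofReal_toReal (measure_ne_top e _)).symm
  have hEr0 : 0 ≤ Er := ENNReal.toReal_nonneg
  have hrepr : ∀ μ : ℝ, 0 < μ → ∫ l, μ ^ 2 / (l * (l + μ) ^ 2) ∂e =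
      (∫⁻ l, ENNReal.ofReal (μ ^ 2 / (l * (l + μ) ^ 2)) ∂e).toReal := by
    intro μ hμ
    apply integral_eq_lintegral_of_nonneg_ae
    · have hae : ∀ᵐ l ∂e, 0 < l := by
        rw [ae_iff]
        refine measure_mono_null ?_ he
        intro x hx
        exact le_of_not_gt hx
      filter_upwards [hae] with l hl
      positivity
    · apply Measurable.aestronglyMeasurable
      fun_prop
  have hbig : ∀ μ : ℝ, 1 ≤ μ →
      ∫⁻ l, ENNReal.ofReal (μ ^ 2 / (l * (l + μ) ^ 2)) ∂e ≤ ENNReal.ofReal (C + Er) := by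
    intro μ hμ
    refine le_trans (Lbig e he α C h μ hμ) ?_
    rw [Real.one_rpow, mul_one, hEr, ← ENNReal.ofReal_add hC0 hEr0]
  have hsmall : ∀ μ : ℝ, 0 < μ → μ ≤ 1 → ∀ Iv : ℝ, 0 ≤ Iv →
      (∫ t in μ..1, 2 * C * t ^ (α - 4)) = Iv →
      ∫⁻ l, ENNReal.ofReal (μ ^ 2 / (l * (l + μ) ^ 2)) ∂e ≤
        ENNReal.ofReal (C * μ ^ (α - 1) + μ ^ 2 * (C + Iv) + μ ^ 2 * Er) := by
    intro μ hμ hμ1 Iv hIv0 hIveq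
    refine le_trans (Lmaster e he α C hC0 h μ hμ hμ1) ?_
    have n1 : 0 ≤ C * μ ^ (α - 1) := mul_nonneg hC0 (Real.rpow_nonneg hμ.le _)
    have n2 : 0 ≤ μ ^ 2 * (C + Iv) := mul_nonneg (sq_nonneg μ) (by linarith)
    have n3 : 0 ≤ μ ^ 2 * Er := mul_nonneg (sq_nonneg μ) hEr0
    rw [hIveq, hEr, ← ENNReal.ofReal_add hC0 hIv0,
      ← ENNReal.ofReal_mul (sq_nonneg μ), ← ENNReal.ofReal_mul (sq_nonneg μ),
      ← ENNReal.ofReal_add n1 n2, ← ENNReal.ofReal_add (by linarith) n3]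
  have hnat2 : ∀ μ : ℝ, μ ^ (((2:ℕ)):ℝ) = μ ^ 2 := fun μ => Real.rpow_natCast μ 2
  rcases lt_trichotomy α 3 with hα3 | hα3 | hα3
  · -- case α < 3
    have h3α : 0 < 3 - α := by linarith
    set D := 2 * C / (3 - α) with hD
    have hD0 : 0 ≤ D := le_of_lt (div_pos (by linarith) h3α)
    refine ⟨2 * C + D + Er + 1, by linarith, fun μ hμ => ?_⟩
    have hC'pos : (0:ℝ) < 2 * C + D + Er + 1 := by linarith
    refine ⟨by rw [hrepr μ hμ]; exact ENNReal.toReal_nonneg, fun _ => ?_,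
      fun hcon => absurd (hcon ▸ hα3) (lt_irrefl 3),
      fun hcon => absurd (hα3.trans hcon) (lt_irrefl α)⟩
    rw [hrepr μ hμ]
    apply ENNReal.toReal_le_of_le_ofReal
      (mul_nonneg hC'pos.le (Real.rpow_nonneg hμ.le _))
    rcases le_or_gt 1 μ with hμ1 | hμ1
    · refine le_trans (hbig μ hμ1) (ENNReal.ofReal_le_ofReal ?_)
      have h1p : (1:ℝ) ≤ μ ^ (α - 1) := by
        calc (1:ℝ) = 1 ^ (α - 1) := (Real.one_rpow _).symm
          _ ≤ μ ^ (α - 1) := Real.rpow_le_rpow (by norm_num) hμ1 (by linarith)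
      have t1 := mul_le_mul_of_nonneg_left h1p hC'pos.le
      linarith
    · have hμle : μ ≤ 1 := hμ1.le
      set q := μ ^ (α - 3) with hq
      have hq1 : (1:ℝ) ≤ q := by
        calc (1:ℝ) = μ ^ (0:ℝ) := (Real.rpow_zero μ).symm
          _ ≤ q := Real.rpow_le_rpow_of_exponent_ge hμ hμle (by linarith)
      have hane : α - 3 ≠ 0 := by intro hcon; linarith
      have hane' : (3:ℝ) - α ≠ 0 := by intro hcon; linarith
      have hIv0 : 0 ≤ 2 * C * ((1 - q) / (α - 3)) := by
        apply mul_nonneg (by linarith)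
        rw [div_nonneg_iff]
        exact Or.inr ⟨by linarith, by linarith⟩
      refine le_trans (hsmall μ hμ hμle _ hIv0 (Iv_eq α C μ (by intro hcon; linarith) hμ hμle))
        (ENNReal.ofReal_le_ofReal ?_)
      have hIvle : 2 * C * ((1 - q) / (α - 3)) ≤ D * q := by
        have e0 : 2 * C * ((1 - q) / (α - 3)) = 2 * C * (q - 1) / (3 - α) := by
          field_simp
          ring
        have e0' : D * q = 2 * C * q / (3 - α) := by rw [hD]; ring
        rw [e0, e0']
        gcongr
        · linarith
      have hm : μ ^ 2 * q = μ ^ (α - 1) := by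
        rw [← hnat2 μ, hq, ← Real.rpow_add hμ]
        congr 1
        push_cast
        ring
      have hμ2 : μ ^ 2 ≤ μ ^ (α - 1) := by
        rw [← hnat2 μ]
        apply Real.rpow_le_rpow_of_exponent_ge hμ hμle
        push_cast
        linarith
      have hP0 : (0:ℝ) ≤ μ ^ (α - 1) := Real.rpow_nonneg hμ.le _
      have e1 := mul_le_mul_of_nonneg_left hIvle (sq_nonneg μ)
      have e2 : μ ^ 2 * (D * q) = D * μ ^ (α - 1) := by rw [← hm]; ring
      have e3 := mul_le_mul_of_nonneg_left hμ2 hC0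
      have e4 := mul_le_mul_of_nonneg_left hμ2 hEr0
      nlinarith
  · -- case α = 3
    subst hα3
    refine ⟨4 * C + Er + 1, by linarith, fun μ hμ => ?_⟩
    have hC'pos : (0:ℝ) < 4 * C + Er + 1 := by linarith
    refine ⟨by rw [hrepr μ hμ]; exact ENNReal.toReal_nonneg,
      fun hcon => absurd hcon (lt_irrefl 3), fun _ => ?_,
      fun hcon => absurd hcon (lt_irrefl 3)⟩
    set L := Real.log (1 / μ) with hL
    set M := max 1 L with hM
    have hM1 : (1:ℝ) ≤ M := le_max_left _ _
    have hML : L ≤ M := le_max_right _ _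
    have hMnn : (0:ℝ) ≤ M := by linarith
    rw [hrepr μ hμ]
    apply ENNReal.toReal_le_of_le_ofReal
      (mul_nonneg (mul_nonneg hC'pos.le (sq_nonneg μ)) hMnn)
    rcases le_or_gt 1 μ with hμ1 | hμ1
    · refine le_trans (hbig μ hμ1) (ENNReal.ofReal_le_ofReal ?_)
      have hμsq1 : (1:ℝ) ≤ μ ^ 2 := by nlinarith
      have t1 := mul_le_mul_of_nonneg_left hμsq1 hC'pos.le
      have t2 := mul_le_mul_of_nonneg_left hM1 (mul_nonneg hC'pos.le (sq_nonneg μ))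
      nlinarith
    · have hμle : μ ≤ 1 := hμ1.le
      have hL0 : 0 ≤ L := Real.log_nonneg (by rw [le_div_iff₀ hμ]; linarith)
      have hIv0 : 0 ≤ 2 * C * L := mul_nonneg (by linarith) hL0
      refine le_trans (hsmall μ hμ hμle _ hIv0 (Iv_eq3 C μ hμ hμle))
        (ENNReal.ofReal_le_ofReal ?_)
      have hp2 : μ ^ ((3:ℝ) - 1) = μ ^ 2 := by
        rw [show (3:ℝ) - 1 = ((2:ℕ):ℝ) by norm_num, hnat2]
      rw [hp2]
      have t1 := mul_le_mul_of_nonneg_left hM1 (mul_nonneg hC0 (sq_nonneg μ))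
      have t2 := mul_le_mul_of_nonneg_left hML
        (mul_nonneg (by linarith : (0:ℝ) ≤ 2 * C) (sq_nonneg μ))
      have t3 := mul_le_mul_of_nonneg_left hM1 (mul_nonneg hEr0 (sq_nonneg μ))
      have t4 : 0 ≤ μ ^ 2 * M := mul_nonneg (sq_nonneg μ) hMnn
      nlinarith
  · -- case 3 < α
    have h3α : 0 < α - 3 := by linarith
    set D := 2 * C / (α - 3) with hD
    have hD0 : 0 ≤ D := le_of_lt (div_pos (by linarith) h3α)
    refine ⟨2 * C + D + Er + 1, by linarith, fun μ hμ => ?_⟩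
    have hC'pos : (0:ℝ) < 2 * C + D + Er + 1 := by linarith
    refine ⟨by rw [hrepr μ hμ]; exact ENNReal.toReal_nonneg,
      fun hcon => absurd (hα3.trans hcon) (lt_irrefl 3),
      fun hcon => by rw [hcon] at hα3; exact absurd hα3 (lt_irrefl 3),
      fun _ => ?_⟩
    rw [hrepr μ hμ]
    apply ENNReal.toReal_le_of_le_ofReal (mul_nonneg hC'pos.le (sq_nonneg μ))
    rcases le_or_gt 1 μ with hμ1 | hμ1
    · refine le_trans (hbig μ hμ1) (ENNReal.ofReal_le_ofReal ?_)
      have hμsq1 : (1:ℝ) ≤ μ ^ 2 := by nlinarith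
      have t1 := mul_le_mul_of_nonneg_left hμsq1 hC'pos.le
      linarith
    · have hμle : μ ≤ 1 := hμ1.le
      set q := μ ^ (α - 3) with hq
      have hq1 : q ≤ 1 := Real.rpow_le_one hμ.le hμle (by linarith)
      have hq0 : 0 ≤ q := Real.rpow_nonneg hμ.le _
      have hIv0 : 0 ≤ 2 * C * ((1 - q) / (α - 3)) :=
        mul_nonneg (by linarith) (div_nonneg (by linarith) (by linarith))
      refine le_trans (hsmall μ hμ hμle _ hIv0 (Iv_eq α C μ (by intro hcon; linarith) hμ hμle))
        (ENNReal.ofReal_le_ofReal ?_)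
      have hIvle : 2 * C * ((1 - q) / (α - 3)) ≤ D := by
        rw [hD]
        rw [div_eq_mul_inv, div_eq_mul_inv]
        have hinv : 0 ≤ (α - 3)⁻¹ := by positivity
        nlinarith [mul_nonneg (mul_nonneg (by linarith : (0:ℝ) ≤ 2 * C) hq0) hinv]
      have hμ2 : μ ^ (α - 1) ≤ μ ^ 2 := by
        rw [← hnat2 μ]
        apply Real.rpow_le_rpow_of_exponent_ge hμ hμle
        push_cast
        linarith
      have e1 := mul_le_mul_of_nonneg_left hIvle (sq_nonneg μ)
      have e3 := mul_le_mul_of_nonneg_right hμ2 hC0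
      have e4 : 0 ≤ μ ^ 2 := sq_nonneg μ
      nlinarith
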